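/- Let (x,y) : [0,T] → ℝ² be a differentiable solution of x' = max(x² − y, 0), y' = x with H(x(0), y(0)) < 0, where H(x,y) = (1/2) e^{−2y} (y − x² + 1/2). Then for all t ∈ [0,T]: y(t) ≤ x(t)² − 1/2 (in particular y(t) < x(t)², so the set {y ≤ x²} is invariant along such solutions and the trajectory never enters the critical manifold C₀,₂), H(x(t), y(t)) = H(x(0), y(0)), and x'(t) ≥ 1/2; consequently x(t) ≥ x(0) + t/2 for all t ∈ [0,T], so x grows without bound along the forward trajectory. -/

import Mathlib

/-- The constant of motion `H(x,y) = (1/2) e^{-2y} (y - x² + 1/2)` of the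
chart-`K₂` canard system. -/
noncomputable def canardH (p : ℝ × ℝ) : ℝ :=
  (1 / 2) * Real.exp (-2 * p.2) * (p.2 - p.1 ^ 2 + 1 / 2)

/-- Along any solution of the chart-`K₂` reduced canard system
`x' = max(x² - y, 0)`, `y' = x` with `H(x 0, y 0) < 0`, one has for all
`t ∈ [0,T]`: `y t ≤ (x t)² - 1/2` (so the trajectory never enters `C₀,₂`),
`H` is conserved, the speed `x' = max(x² - y, 0)` is at least `1/2`, and hence
`x t ≥ x 0 + t/2`, so `x` grows without bound. -/
theorem canard_negative_level_unbounded
    (T : ℝ) (hT : 0 ≤ T) (x y : ℝ → ℝ)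
    (hx : ∀ t ∈ Set.Icc (0 : ℝ) T, HasDerivAt x (max ((x t) ^ 2 - y t) 0) t)
    (hy : ∀ t ∈ Set.Icc (0 : ℝ) T, HasDerivAt y (x t) t)
    (h0 : canardH (x 0, y 0) < 0) :
    ∀ t ∈ Set.Icc (0 : ℝ) T,
      y t ≤ (x t) ^ 2 - 1 / 2 ∧
      canardH (x t, y t) = canardH (x 0, y 0) ∧
      1 / 2 ≤ max ((x t) ^ 2 - y t) 0 ∧
      x 0 + t / 2 ≤ x t := by
  set F : ℝ → ℝ := fun t => canardH (x t, y t) with hFdef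
  have hFeq : F = fun s => 1 / 2 * Real.exp (-2 * y s) * (y s - x s ^ 2 + 1 / 2) := rfl
  have hxc : ContinuousOn x (Set.Icc 0 T) :=
    fun t ht => ((hx t ht).continuousAt).continuousWithinAt
  have hyc : ContinuousOn y (Set.Icc 0 T) :=
    fun t ht => ((hy t ht).continuousAt).continuousWithinAt
  have hFc : ContinuousOn F (Set.Icc 0 T) := by
    rw [hFeq]
    exact (continuousOn_const.mul
      (Real.continuous_exp.comp_continuousOn (continuousOn_const.mul hyc))).mul
      ((hyc.sub (hxc.pow 2)).add continuousOn_const)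
  -- negativity of F implies staying in the region
  have hreg : ∀ s, F s < 0 → y s - x s ^ 2 + 1 / 2 < 0 := by
    intro s hs
    rw [hFeq] at hs
    nlinarith [Real.exp_pos (-2 * y s)]
  -- zero derivative in the region
  have key : ∀ t ∈ Set.Icc (0 : ℝ) T, y t ≤ (x t) ^ 2 → HasDerivAt F 0 t := by
    intro t ht hyx
    have hM : max ((x t) ^ 2 - y t) 0 = (x t) ^ 2 - y t := max_eq_left (by linarith)
    have h1 : HasDerivAt (fun s => -2 * y s) (-2 * x t) t := (hy t ht).const_mul (-2)
    have h2 := h1.exp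
    have h3 : HasDerivAt (fun s => y s - x s ^ 2 + 1 / 2)
        (x t - 2 * x t ^ 1 * max ((x t) ^ 2 - y t) 0) t :=
      ((hy t ht).sub ((hx t ht).pow 2)).add_const _
    have h4 := (h2.const_mul (1 / 2 : ℝ)).mul h3
    rw [hFeq]
    refine h4.congr_deriv ?_
    rw [hM]; ring
  have hF0 : F 0 < 0 := h0
  -- constancy on an initial segment where F stays negative
  have hconst : ∀ t ∈ Set.Icc (0 : ℝ) T, (∀ s ∈ Set.Ico (0 : ℝ) t, F s < 0) → F t = F 0 := by
    intro t ht hneg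
    have := constant_of_has_deriv_right_zero (f := F) (a := 0) (b := t)
      (hFc.mono (Set.Icc_subset_Icc le_rfl ht.2))
      (fun s hs => by
        have hsT : s ∈ Set.Icc (0 : ℝ) T := ⟨hs.1, hs.2.le.trans ht.2⟩
        have := hreg s (hneg s hs)
        exact (key s hsT (by linarith)).hasDerivWithinAt)
    exact this t ⟨ht.1, le_rfl⟩
  -- F is negative everywhere on [0,T]
  have hFneg : ∀ t ∈ Set.Icc (0 : ℝ) T, F t < 0 := by
    by_contra hbad
    push_neg at hbad
    obtain ⟨t₀, ht₀, hge⟩ := hbad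
    set B := {t | t ∈ Set.Icc (0 : ℝ) T ∧ 0 ≤ F t} with hBdef
    have hBne : B.Nonempty := ⟨t₀, ht₀, hge⟩
    have hBbd : BddBelow B := ⟨0, fun t ht => ht.1.1⟩
    have hBclosed : IsClosed B := by
      have : B = Set.Icc (0 : ℝ) T ∩ F ⁻¹' Set.Ici 0 := by
        ext t; simp [hBdef, Set.mem_Ici]
      rw [this]
      exact hFc.preimage_isClosed_of_isClosed isClosed_Icc isClosed_Ici
    have ht₁B : sInf B ∈ B := hBclosed.csInf_mem hBne hBbd
    have hneg : ∀ s ∈ Set.Ico (0 : ℝ) (sInf B), F s < 0 := by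
      intro s hs
      by_contra hc
      push_neg at hc
      have hsB : s ∈ B := ⟨⟨hs.1, hs.2.le.trans ht₁B.1.2⟩, hc⟩
      exact absurd (csInf_le hBbd hsB) (not_le.mpr hs.2)
    have := hconst (sInf B) ht₁B.1 hneg
    linarith [ht₁B.2]
  -- H is conserved
  have hHeq : ∀ t ∈ Set.Icc (0 : ℝ) T, F t = F 0 := by
    intro t ht
    exact hconst t ht (fun s hs => hFneg s ⟨hs.1, (hs.2.le.trans ht.2)⟩)
  -- main bound
  have hbound : ∀ t ∈ Set.Icc (0 : ℝ) T, y t ≤ (x t) ^ 2 - 1 / 2 := by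
    intro t ht
    have := hreg t (hFneg t ht)
    linarith
  -- the growth estimate via monotonicity of g s = x s - s/2
  have hgrow : ∀ t ∈ Set.Icc (0 : ℝ) T, x 0 + t / 2 ≤ x t := by
    set g : ℝ → ℝ := fun s => x s - s / 2 with hgdef
    have hgc : ContinuousOn g (Set.Icc 0 T) :=
      hxc.sub (continuous_id.div_const 2).continuousOn
    have hgd : ∀ s ∈ Set.Ioo (0 : ℝ) T,
        HasDerivAt g (max ((x s) ^ 2 - y s) 0 - 1 / 2) s := by
      intro s hs
      exact (hx s ⟨hs.1.le, hs.2.le⟩).sub ((hasDerivAt_id s).div_const 2)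
    have hmono : MonotoneOn g (Set.Icc 0 T) := by
      apply monotoneOn_of_deriv_nonneg (convex_Icc 0 T) hgc
      · intro s hs
        rw [interior_Icc] at hs
        exact (hgd s hs).differentiableAt.differentiableWithinAt
      · intro s hs
        rw [interior_Icc] at hs
        rw [(hgd s hs).deriv]
        have h1 := hbound s ⟨hs.1.le, hs.2.le⟩
        have h2 : (1 : ℝ) / 2 ≤ max ((x s) ^ 2 - y s) 0 :=
          le_max_of_le_left (by linarith)
        linarith
    intro t ht
    have := hmono (Set.left_mem_Icc.mpr hT) ht ht.1
    simp only [hgdef] at this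
    linarith
  intro t ht
  refine ⟨hbound t ht, hHeq t ht, le_max_of_le_left (by linarith [hbound t ht]), hgrow t ht⟩
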